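/- Let S be a finite set of locally monotonic homeomorphisms of a compact set K ⊆ ℝ. Then there exists r₀ > 0 such that every element of S is monotone on I ∩ K for every interval I of length less than r₀ containing no break pair of that element; equivalently, every element of S is regular on every interval of length less than r₀. -/

import Mathlib

/-- `a` and `b` are the two endpoints of a gap (bounded connected component) of `ℝ \ K`. -/
def IsGap (K : Set ℝ) (a b : ℝ) : Prop :=
  a ∈ K ∧ b ∈ K ∧ a < b ∧ Set.Ioo a b ∩ K = ∅

/-- `{a, b}` is a break pair of the homeomorphism `g` of `K`. -/
def IsBreakPair (K : Set ℝ) (g : K ≃ₜ K) (a b : K) : Prop :=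
  (IsGap K a b ∨ IsGap K b a) ∧
    ¬(IsGap K (g a) (g b) ∨ IsGap K (g b) (g a))

/-- `f` is locally monotonic. -/
def LocallyMonotone (K : Set ℝ) (f : K → ℝ) : Prop :=
  ∀ x : K, ∃ I : Set ℝ, IsOpen I ∧ (x : ℝ) ∈ I ∧
    (MonotoneOn f {y : K | (y : ℝ) ∈ I} ∨ AntitoneOn f {y : K | (y : ℝ) ∈ I})

open Metric Set

lemma core_mono (K : Set ℝ) (g : K ≃ₜ K) (P : Set K)
    (hmono : MonotoneOn (fun y : K => (g y : ℝ)) P)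
    (c d : K) (hc : c ∈ P) (hd : d ∈ P) (hgap : IsGap K c d)
    (Hz : ∀ z : K, (z : ℝ) ∈ Set.Ioo ((g c : ℝ)) ((g d : ℝ)) → g.symm z ∈ P) :
    IsGap K (g c) (g d) := by
  obtain ⟨hcK, hdK, hcd, hIoo⟩ := hgap
  have hne : c ≠ d := fun h => by rw [h] at hcd; exact lt_irrefl _ hcd
  have hle : ((g c : ℝ)) ≤ ((g d : ℝ)) := hmono hc hd hcd.le
  have hne' : ((g c : ℝ)) ≠ ((g d : ℝ)) :=
    Subtype.coe_injective.ne (g.injective.ne hne)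
  refine ⟨(g c).2, (g d).2, lt_of_le_of_ne hle hne', ?_⟩
  rw [Set.eq_empty_iff_forall_notMem]
  rintro z ⟨hz1, hz2⟩
  set w : K := ⟨z, hz2⟩
  have hwP : g.symm w ∈ P := Hz w hz1
  have hfw : ((g (g.symm w) : ℝ)) = z := by simp [w]
  have hnotin : ((g.symm w : ℝ)) ∉ Set.Ioo (c : ℝ) (d : ℝ) := by
    intro h
    exact absurd hIoo (by
      rw [Set.eq_empty_iff_forall_notMem]
      push_neg
      exact ⟨_, h, (g.symm w).2⟩)
  rcases le_or_gt ((g.symm w : ℝ)) c with h | h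
  · have hz' : z ≤ ((g c : ℝ)) := by simpa [w] using hmono hwP hc h
    exact absurd hz1.1 (not_lt.mpr hz')
  · have hge : (d : ℝ) ≤ (g.symm w : ℝ) := by
      by_contra hlt
      exact hnotin ⟨h, lt_of_not_ge hlt⟩
    have hz' : ((g d : ℝ)) ≤ z := by simpa [w] using hmono hd hwP hge
    exact absurd hz1.2 (not_lt.mpr hz')

lemma core_anti (K : Set ℝ) (g : K ≃ₜ K) (P : Set K)
    (hanti : AntitoneOn (fun y : K => (g y : ℝ)) P)
    (c d : K) (hc : c ∈ P) (hd : d ∈ P) (hgap : IsGap K c d)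
    (Hz : ∀ z : K, (z : ℝ) ∈ Set.Ioo ((g d : ℝ)) ((g c : ℝ)) → g.symm z ∈ P) :
    IsGap K (g d) (g c) := by
  obtain ⟨hcK, hdK, hcd, hIoo⟩ := hgap
  have hne : c ≠ d := fun h => by rw [h] at hcd; exact lt_irrefl _ hcd
  have hle : ((g d : ℝ)) ≤ ((g c : ℝ)) := hanti hc hd hcd.le
  have hne' : ((g d : ℝ)) ≠ ((g c : ℝ)) :=
    Subtype.coe_injective.ne (g.injective.ne hne.symm)
  refine ⟨(g d).2, (g c).2, lt_of_le_of_ne hle hne', ?_⟩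
  rw [Set.eq_empty_iff_forall_notMem]
  rintro z ⟨hz1, hz2⟩
  set w : K := ⟨z, hz2⟩
  have hwP : g.symm w ∈ P := Hz w hz1
  have hfw : ((g (g.symm w) : ℝ)) = z := by simp [w]
  have hnotin : ((g.symm w : ℝ)) ∉ Set.Ioo (c : ℝ) (d : ℝ) := by
    intro h
    exact absurd hIoo (by
      rw [Set.eq_empty_iff_forall_notMem]
      push_neg
      exact ⟨_, h, (g.symm w).2⟩)
  rcases le_or_gt ((g.symm w : ℝ)) c with h | h
  · have hz' : ((g c : ℝ)) ≤ z := by simpa [w] using hanti hwP hc h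
    exact absurd hz1.2 (not_lt.mpr hz')
  · have hge : (d : ℝ) ≤ (g.symm w : ℝ) := by
      by_contra hlt
      exact hnotin ⟨h, lt_of_not_ge hlt⟩
    have hz' : z ≤ ((g d : ℝ)) := by simpa [w] using hanti hd hwP hge
    exact absurd hz1.1 (not_lt.mpr hz')

lemma point_lemma (K : Set ℝ) (hK : IsCompact K) (g : K ≃ₜ K)
    (hm : LocallyMonotone K (fun x => (g x : ℝ))) (x : K) :
    ∃ δ > (0 : ℝ),
      (∀ c d : K, (c : ℝ) ∈ ball (x : ℝ) δ → (d : ℝ) ∈ ball (x : ℝ) δ →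
        ¬ IsBreakPair K g c d) ∧
      (MonotoneOn (fun y : K => (g y : ℝ)) {y : K | (y : ℝ) ∈ ball (x : ℝ) δ} ∨
        AntitoneOn (fun y : K => (g y : ℝ)) {y : K | (y : ℝ) ∈ ball (x : ℝ) δ}) := by
  haveI : CompactSpace K := isCompact_iff_compactSpace.mp hK
  obtain ⟨I, hIopen, hxI, hImono⟩ := hm x
  obtain ⟨ε, hε, hball⟩ := Metric.isOpen_iff.mp hIopen _ hxI
  set f : K → ℝ := fun y => (g y : ℝ) with hf
  have hfc : Continuous f := continuous_subtype_val.comp g.continuous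
  set F : Set ℝ := f '' {y : K | (y : ℝ) ∉ ball (x : ℝ) ε} with hF
  have hFcompact : IsCompact F := by
    apply IsCompact.image _ hfc
    have : IsOpen {y : K | (y : ℝ) ∈ ball (x : ℝ) ε} :=
      isOpen_ball.preimage continuous_subtype_val
    exact this.isClosed_compl.isCompact
  have hgxF : f x ∉ F := by
    rintro ⟨y, hy, hyx⟩
    have : y = x := g.injective (Subtype.ext hyx)
    exact hy (this ▸ mem_ball_self hε)
  obtain ⟨η, hη, hηball⟩ := Metric.isOpen_iff.mp hFcompact.isClosed.isOpen_compl _ hgxF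
  obtain ⟨δ, hδ, hδcont⟩ := Metric.continuousAt_iff.mp hfc.continuousAt η hη
  refine ⟨min δ ε, lt_min hδ hε, ?_, ?_⟩
  · -- no break pairs
    intro c d hc hd hbp
    have hsubε : ∀ y : K, (y : ℝ) ∈ ball (x : ℝ) (min δ ε) → (y : ℝ) ∈ I :=
      fun y hy => hball (ball_subset_ball (min_le_right _ _) hy)
    have hcI : c ∈ {y : K | (y : ℝ) ∈ I} := hsubε c hc
    have hdI : d ∈ {y : K | (y : ℝ) ∈ I} := hsubε d hd
    have himg : ∀ y : K, (y : ℝ) ∈ ball (x : ℝ) (min δ ε) → f y ∈ ball (f x) η := by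
      intro y hy
      have : dist y x < δ := by
        rw [Subtype.dist_eq]
        exact lt_of_lt_of_le (mem_ball.mp hy) (min_le_left _ _)
      exact mem_ball.mpr (hδcont this)
    have hmem : ∀ z : K, (z : ℝ) ∈ ball (f x) η → g.symm z ∈ {y : K | (y : ℝ) ∈ I} := by
      intro z hz
      by_contra hzP
      have hnb : ((g.symm z : ℝ)) ∉ ball (x : ℝ) ε := fun h => hzP (hball h)
      have : f (g.symm z) ∈ F := ⟨g.symm z, hnb, rfl⟩
      have hz' : (z : ℝ) ∈ F := by simpa [hf] using this
      exact hηball hz hz'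
    have hbetween : ∀ (p q : K) (z : ℝ), (p : ℝ) ∈ ball (x : ℝ) (min δ ε) →
        (q : ℝ) ∈ ball (x : ℝ) (min δ ε) → z ∈ Set.Ioo (f p) (f q) →
        z ∈ ball (f x) η := by
      intro p q z hp hq hz
      have h1 := himg p hp
      have h2 := himg q hq
      rw [Real.ball_eq_Ioo] at h1 h2 ⊢
      exact ⟨lt_trans h1.1 hz.1, lt_trans hz.2 h2.2⟩
    rcases hbp.1 with hgap | hgap
    · rcases hImono with hmono | hanti
      · exact hbp.2 (Or.inl (core_mono K g _ hmono c d hcI hdI hgap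
          (fun z hz => hmem z (hbetween c d z hc hd hz))))
      · exact hbp.2 (Or.inr (core_anti K g _ hanti c d hcI hdI hgap
          (fun z hz => hmem z (hbetween d c z hd hc hz))))
    · rcases hImono with hmono | hanti
      · exact hbp.2 (Or.inr (core_mono K g _ hmono d c hdI hcI hgap
          (fun z hz => hmem z (hbetween d c z hd hc hz))))
      · exact hbp.2 (Or.inl (core_anti K g _ hanti d c hdI hcI hgap
          (fun z hz => hmem z (hbetween c d z hc hd hz))))
  · -- monotone on the small ball
    have hsub : {y : K | (y : ℝ) ∈ ball (x : ℝ) (min δ ε)} ⊆ {y : K | (y : ℝ) ∈ I} :=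
      fun y hy => hball (ball_subset_ball (min_le_right _ _) hy)
    rcases hImono with h | h
    · exact Or.inl (h.mono hsub)
    · exact Or.inr (h.mono hsub)

lemma g_lemma (K : Set ℝ) (hK : IsCompact K) (g : K ≃ₜ K)
    (hm : LocallyMonotone K (fun x => (g x : ℝ))) :
    ∃ r > (0 : ℝ), ∀ a b : ℝ, b - a < r →
      ((∀ c d : K, (c : ℝ) ∈ Set.Icc a b → (d : ℝ) ∈ Set.Icc a b →
          ¬ IsBreakPair K g c d) ∧
        (MonotoneOn (fun x : K => (g x : ℝ)) {x : K | (x : ℝ) ∈ Set.Icc a b} ∨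
          AntitoneOn (fun x : K => (g x : ℝ)) {x : K | (x : ℝ) ∈ Set.Icc a b})) := by
  choose δ hδpos hδ using point_lemma K hK g hm
  have hcover : K ⊆ ⋃ x : K, ball (x : ℝ) (δ x) :=
    fun y hy => Set.mem_iUnion.mpr ⟨⟨y, hy⟩, mem_ball_self (hδpos _)⟩
  obtain ⟨r, hr, hleb⟩ := lebesgue_number_lemma_of_metric hK (fun _ => isOpen_ball) hcover
  refine ⟨r, hr, ?_⟩
  intro a b hab
  by_cases hne : ∃ y : K, (y : ℝ) ∈ Set.Icc a b
  · obtain ⟨y, hy⟩ := hne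
    obtain ⟨x, hx⟩ := hleb (y : ℝ) y.2
    have hsub : Set.Icc a b ⊆ ball ((x : ℝ)) (δ x) := by
      intro t ht
      apply hx
      rw [mem_ball]
      have h1 : |t - (y : ℝ)| ≤ b - a :=
        abs_sub_le_iff.mpr ⟨by linarith [ht.1, ht.2, hy.1, hy.2],
          by linarith [ht.1, ht.2, hy.1, hy.2]⟩
      exact lt_of_le_of_lt h1 hab
    refine ⟨fun c d hc hd => (hδ x).1 c d (hsub hc) (hsub hd), ?_⟩
    have hsub' : {z : K | (z : ℝ) ∈ Set.Icc a b} ⊆ {z : K | (z : ℝ) ∈ ball (x : ℝ) (δ x)} :=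
      fun z hz => hsub hz
    rcases (hδ x).2 with h | h
    · exact Or.inl (h.mono hsub')
    · exact Or.inr (h.mono hsub')
  · push_neg at hne
    refine ⟨fun c d hc _ _ => hne c hc, Or.inl ?_⟩
    intro z hz
    exact absurd hz (hne z)

theorem stmt5 (K : Set ℝ) (hK : IsCompact K) (S : Set (K ≃ₜ K)) (hS : S.Finite)
    (hmono : ∀ g ∈ S, LocallyMonotone K (fun x => (g x : ℝ))) :
    ∃ r₀ > (0 : ℝ), ∀ g ∈ S, ∀ a b : ℝ, b - a < r₀ →
      ((∀ c d : K, (c : ℝ) ∈ Set.Icc a b → (d : ℝ) ∈ Set.Icc a b →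
          ¬ IsBreakPair K g c d) ∧
        (MonotoneOn (fun x : K => (g x : ℝ)) {x : K | (x : ℝ) ∈ Set.Icc a b} ∨
          AntitoneOn (fun x : K => (g x : ℝ)) {x : K | (x : ℝ) ∈ Set.Icc a b})) := by
  classical
  have hex : ∀ g : K ≃ₜ K, ∃ r > (0 : ℝ), g ∈ S → ∀ a b : ℝ, b - a < r →
      ((∀ c d : K, (c : ℝ) ∈ Set.Icc a b → (d : ℝ) ∈ Set.Icc a b →
          ¬ IsBreakPair K g c d) ∧
        (MonotoneOn (fun x : K => (g x : ℝ)) {x : K | (x : ℝ) ∈ Set.Icc a b} ∨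
          AntitoneOn (fun x : K => (g x : ℝ)) {x : K | (x : ℝ) ∈ Set.Icc a b})) := by
    intro g
    by_cases hg : g ∈ S
    · obtain ⟨r, hr, hP⟩ := g_lemma K hK g (hmono g hg)
      exact ⟨r, hr, fun _ => hP⟩
    · exact ⟨1, one_pos, fun h => absurd h hg⟩
  choose r hrpos hP using hex
  refine ⟨(insert (1 : ℝ) (hS.toFinset.image r)).min' ⟨1, Finset.mem_insert_self _ _⟩, ?_, ?_⟩
  · refine (Finset.lt_min'_iff _ _).mpr ?_
    intro s hs
    rcases Finset.mem_insert.mp hs with h | h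
    · rw [h]; exact one_pos
    · obtain ⟨g, _, hg⟩ := Finset.mem_image.mp h
      rw [← hg]; exact hrpos g
  · intro g hg a b hab
    have hle := Finset.min'_le (insert (1 : ℝ) (hS.toFinset.image r)) (r g)
      (Finset.mem_insert_of_mem (Finset.mem_image.mpr ⟨g, hS.mem_toFinset.mpr hg, rfl⟩))
    exact hP g hg a b (lt_of_lt_of_le hab hle)
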